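/- Let A ∈ ℝ^{n×n}, B ∈ ℝ^{n×m}, K ∈ ℝ^{m×n}, K̄ ∈ ℝ^{m×q} (q = n + m), and let Ā, P, Ē ∈ ℝ^{q×q} with P symmetric positive definite and Ē invertible, Q ∈ ℝ^{n×n} symmetric positive definite, C̄ ∈ ℝ^{p×q}, N₁ ∈ ℝ^{q×p}, N₂ ∈ ℝ^{q×q}, B̄_f ∈ ℝ^{q×m}, C_ω ∈ ℝ^{p×p}, H₁ ∈ ℝ^{m×p}, H₂ ∈ ℝ^{p×p}, H₃ ∈ ℝ^{p×q}. Set L = Ē P⁻¹ N₁ and 𝓛 = Ē P⁻¹ N₂, and assume: (i) the symmetric block matrix Ξ = [[Ξ₁₁, Ξ₁₂, Ξ₁₃],[Ξ₁₂ᵀ, Ξ₂₂, Ξ₂₃],[Ξ₁₃ᵀ, Ξ₂₃ᵀ, Ξ₃₃]] is negative definite, where Ξ₁₁ = Q(A+BK) + (A+BK)ᵀQ, Ξ₁₂ = Ξ₁₃ = −Q B K̄, Ξ₂₂ = P Ē⁻¹ Ā + (P Ē⁻¹ Ā)ᵀ − N₁ C̄ − C̄ᵀ N₁ᵀ, Ξ₂₃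 = (N₁ C̄)ᵀ, Ξ₃₃ = P Ē⁻¹ Ā + (P Ē⁻¹ Ā)ᵀ − N₂ − N₂ᵀ; (ii) (H₁ C̄)ᵀ = P Ē⁻¹ B̄_f, (H₂ C̄)ᵀ = P Ē⁻¹ L C_ω, and H₃ᵀ = P Ē⁻¹ L C_ω. Let ρ = c + η with c ≥ 0, η ≥ 0, and ω̄ ≥ 0. Let x : ℝ → ℝ^n and ē, ε̄ : ℝ → ℝ^q be differentiable, and let d̄ : ℝ → ℝ^m, ω : ℝ → ℝ^p satisfy |d̄(t)_i| ≤ c and |ω(t)_j| ≤ ω̄ for all t, i, j. Suppose for all t: x′(t) = (A+BK)x(t) − B K̄ ē(t) − B K̄ ε̄(t); Ē ē′(t) = (Ā − L C̄) ē(t) + L C_ω(−ω̄·sgn(H₂ C̄ ē(t)) − ω(t)) + B̄_f(d̄(t) − ρ·sgn(H₁ C̄ ē(t))); and Ē ε̄′(t) = (Ā − 𝓛) ε̄(t) + L C̄ ē(t) + L C_ω(ω(t) − ω̄·sgn(H₃ ε̄(t))). Then V(t) = x(t)ᵀ Q x(t) + ē(t)ᵀ P ē(t) + ε̄(t)ᵀ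 P ε̄(t) is differentiable with V′(t) ≤ 0 for every t, and V′(t) < 0 whenever (x(t), ē(t), ε̄(t)) ≠ (0, 0, 0). -/

import Mathlib

open Matrix

set_option maxHeartbeats 1000000

/-- Componentwise sign vector: `(sgn s) i = 1` if `s i > 0`, `-1` if `s i < 0`, `0` otherwise. -/
noncomputable def sgn {k : Type*} (s : k → ℝ) : k → ℝ := fun i => Real.sign (s i)

lemma mul_real_sign (x : ℝ) : x * Real.sign x = |x| := by
  rcases lt_trichotomy x 0 with h|h|h
  · rw [Real.sign_of_neg h, abs_of_neg h]; ring
  · simp [h]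
  · rw [Real.sign_of_pos h, abs_of_pos h]; ring

lemma dot_sgn {k : Type*} [Fintype k] (s : k → ℝ) : s ⬝ᵥ sgn s = ∑ i, |s i| := by
  simp [dotProduct, sgn, mul_real_sign]

lemma dot_le_sum_abs {k : Type*} [Fintype k] (s v : k → ℝ) (b : ℝ)
    (hv : ∀ i, |v i| ≤ b) : s ⬝ᵥ v ≤ b * ∑ i, |s i| := by
  rw [dotProduct, Finset.mul_sum]
  refine Finset.sum_le_sum fun i _ => ?_
  calc s i * v i ≤ |s i * v i| := le_abs_self _
  _ = |s i| * |v i| := abs_mul _ _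
  _ ≤ |s i| * b := mul_le_mul_of_nonneg_left (hv i) (abs_nonneg _)
  _ = b * |s i| := mul_comm _ _

lemma dot_swap {k l : Type*} [Fintype k] [Fintype l] (M : Matrix k l ℝ)
    (a : k → ℝ) (b : l → ℝ) : a ⬝ᵥ M.mulVec b = b ⬝ᵥ Mᵀ.mulVec a := by
  simp only [dotProduct, mulVec, transpose_apply, Finset.mul_sum]
  rw [Finset.sum_comm]
  congr 1; ext i; congr 1; ext j; ring

lemma two_qf {k : Type*} [Fintype k] (M : Matrix k k ℝ) (a : k → ℝ) :
    2 * (a ⬝ᵥ M.mulVec a) = a ⬝ᵥ (M + Mᵀ).mulVec a := by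
  rw [add_mulVec, dotProduct_add, ← dot_swap]; ring

lemma hasDerivAt_qf {k : Type*} [Fintype k] (M : Matrix k k ℝ)
    (f : ℝ → k → ℝ) (f' : k → ℝ) (t : ℝ) (hf : HasDerivAt f f' t) :
    HasDerivAt (fun t => f t ⬝ᵥ M.mulVec (f t))
      (f' ⬝ᵥ M.mulVec (f t) + f t ⬝ᵥ M.mulVec f') t := by
  have hfi : ∀ i, HasDerivAt (fun t => f t i) (f' i) t := hasDerivAt_pi.mp hf
  have h : HasDerivAt (fun t => ∑ i, ∑ j, f t i * (M i j * f t j))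
      (∑ i, ∑ j, (f' i * (M i j * f t j) + f t i * (M i j * f' j))) t := by
    refine HasDerivAt.fun_sum fun i _ => ?_
    refine HasDerivAt.fun_sum fun j _ => ?_
    exact (hfi i).mul ((hfi j).const_mul (M i j))
  convert h using 1
  · ext t; simp [dotProduct, mulVec, Finset.mul_sum]
  · simp [dotProduct, mulVec, Finset.mul_sum, Finset.sum_add_distrib]

lemma quad_blocks {α β : Type*} [Fintype α] [Fintype β]
    (M₁₁ : Matrix α α ℝ) (M₁₂ : Matrix α β ℝ) (M₂₁ : Matrix β α ℝ) (M₂₂ : Matrix β β ℝ)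
    (a : α → ℝ) (b : β → ℝ) :
    Sum.elim a b ⬝ᵥ (fromBlocks M₁₁ M₁₂ M₂₁ M₂₂).mulVec (Sum.elim a b) =
      a ⬝ᵥ M₁₁.mulVec a + a ⬝ᵥ M₁₂.mulVec b + b ⬝ᵥ M₂₁.mulVec a + b ⬝ᵥ M₂₂.mulVec b := by
  rw [fromBlocks_mulVec, sumElim_dotProduct_sumElim, dotProduct_add, dotProduct_add]
  simp only [Sum.elim_comp_inl, Sum.elim_comp_inr]
  ring


/-- Theorem 4 of the paper: stability of the closed-loop system under the
SMO-CO based compensation controller `u = K̄ x̃̄`.  The augmented dimension `q = n + m` is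
modelled by the index type `Fin n ⊕ Fin m`; the 3×3 block matrix `Ξ` is built with nested
`fromBlocks`. -/
theorem stmt9 {n m p : ℕ}
    (A : Matrix (Fin n) (Fin n) ℝ) (B : Matrix (Fin n) (Fin m) ℝ)
    (K : Matrix (Fin m) (Fin n) ℝ) (Kbar : Matrix (Fin m) (Fin n ⊕ Fin m) ℝ)
    (Abar P E : Matrix (Fin n ⊕ Fin m) (Fin n ⊕ Fin m) ℝ)
    (hPsymm : Pᵀ = P)
    (hPpos : ∀ x : Fin n ⊕ Fin m → ℝ, x ≠ 0 → 0 < x ⬝ᵥ P.mulVec x)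
    (hE : IsUnit E.det)
    (Q : Matrix (Fin n) (Fin n) ℝ)
    (hQsymm : Qᵀ = Q) (hQpos : ∀ x : Fin n → ℝ, x ≠ 0 → 0 < x ⬝ᵥ Q.mulVec x)
    (C : Matrix (Fin p) (Fin n ⊕ Fin m) ℝ)
    (N₁ : Matrix (Fin n ⊕ Fin m) (Fin p) ℝ)
    (N₂ : Matrix (Fin n ⊕ Fin m) (Fin n ⊕ Fin m) ℝ)
    (Bfbar : Matrix (Fin n ⊕ Fin m) (Fin m) ℝ) (Cω : Matrix (Fin p) (Fin p) ℝ)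
    (H₁ : Matrix (Fin m) (Fin p) ℝ) (H₂ : Matrix (Fin p) (Fin p) ℝ)
    (H₃ : Matrix (Fin p) (Fin n ⊕ Fin m) ℝ)
    (L : Matrix (Fin n ⊕ Fin m) (Fin p) ℝ) (hL : L = E * P⁻¹ * N₁)
    (Lc : Matrix (Fin n ⊕ Fin m) (Fin n ⊕ Fin m) ℝ) (hLc : Lc = E * P⁻¹ * N₂)
    (Ξ : Matrix ((Fin n) ⊕ ((Fin n ⊕ Fin m) ⊕ (Fin n ⊕ Fin m)))
                ((Fin n) ⊕ ((Fin n ⊕ Fin m) ⊕ (Fin n ⊕ Fin m))) ℝ)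
    (hΞ : Ξ = fromBlocks
      (Q * (A + B * K) + (A + B * K)ᵀ * Q)
      (fromCols (-(Q * B * Kbar)) (-(Q * B * Kbar)))
      (fromRows (-(Q * B * Kbar))ᵀ (-(Q * B * Kbar))ᵀ)
      (fromBlocks
        (P * E⁻¹ * Abar + (P * E⁻¹ * Abar)ᵀ - N₁ * C - Cᵀ * N₁ᵀ)
        ((N₁ * C)ᵀ)
        ((N₁ * C)ᵀ)ᵀ
        (P * E⁻¹ * Abar + (P * E⁻¹ * Abar)ᵀ - N₂ - N₂ᵀ)))
    (hNegDef : ∀ ξ : (Fin n) ⊕ ((Fin n ⊕ Fin m) ⊕ (Fin n ⊕ Fin m)) → ℝ,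
      ξ ≠ 0 → ξ ⬝ᵥ Ξ.mulVec ξ < 0)
    (hH₁ : (H₁ * C)ᵀ = P * E⁻¹ * Bfbar)
    (hH₂ : (H₂ * C)ᵀ = P * E⁻¹ * L * Cω)
    (hH₃ : H₃ᵀ = P * E⁻¹ * L * Cω)
    (c η ρ ωb : ℝ) (hc : 0 ≤ c) (hη : 0 ≤ η) (hρ : ρ = c + η) (hωb : 0 ≤ ωb)
    (x : ℝ → Fin n → ℝ) (hx : Differentiable ℝ x)
    (e ε : ℝ → Fin n ⊕ Fin m → ℝ) (he : Differentiable ℝ e) (hε : Differentiable ℝ ε)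
    (d : ℝ → Fin m → ℝ) (ω : ℝ → Fin p → ℝ)
    (hd : ∀ t i, |d t i| ≤ c) (hω : ∀ t j, |ω t j| ≤ ωb)
    (hxdyn : ∀ t, deriv x t =
      (A + B * K).mulVec (x t) - (B * Kbar).mulVec (e t) - (B * Kbar).mulVec (ε t))
    (hedyn : ∀ t, E.mulVec (deriv e t) =
      (Abar - L * C).mulVec (e t)
        + (L * Cω).mulVec (-(ωb • sgn ((H₂ * C).mulVec (e t))) - ω t)
        + Bfbar.mulVec (d t - ρ • sgn ((H₁ * C).mulVec (e t))))
    (hεdyn : ∀ t, E.mulVec (deriv ε t) =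
      (Abar - Lc).mulVec (ε t) + (L * C).mulVec (e t)
        + (L * Cω).mulVec (ω t - ωb • sgn (H₃.mulVec (ε t)))) :
    Differentiable ℝ (fun t =>
        x t ⬝ᵥ Q.mulVec (x t) + e t ⬝ᵥ P.mulVec (e t) + ε t ⬝ᵥ P.mulVec (ε t)) ∧
      (∀ t, deriv (fun t =>
        x t ⬝ᵥ Q.mulVec (x t) + e t ⬝ᵥ P.mulVec (e t) + ε t ⬝ᵥ P.mulVec (ε t)) t ≤ 0) ∧
      (∀ t, (x t, e t, ε t) ≠ (0, 0, 0) →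
        deriv (fun t =>
          x t ⬝ᵥ Q.mulVec (x t) + e t ⬝ᵥ P.mulVec (e t) + ε t ⬝ᵥ P.mulVec (ε t)) t < 0) := by
  -- P is invertible
  have hP : IsUnit P.det := by
    rw [isUnit_iff_ne_zero]
    intro h
    obtain ⟨v, hv0, hv⟩ := (Matrix.exists_mulVec_eq_zero_iff).mpr h
    have := hPpos v hv0
    rw [hv] at this
    simp at this
  -- key matrix identities
  have hPEL : P * E⁻¹ * L = N₁ := by
    rw [hL]
    simp only [Matrix.mul_assoc]
    rw [← Matrix.mul_assoc E⁻¹ E, Matrix.nonsing_inv_mul E hE, Matrix.one_mul,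
      ← Matrix.mul_assoc P P⁻¹, Matrix.mul_nonsing_inv P hP, Matrix.one_mul]
  have hPELc : P * E⁻¹ * Lc = N₂ := by
    rw [hLc]
    simp only [Matrix.mul_assoc]
    rw [← Matrix.mul_assoc E⁻¹ E, Matrix.nonsing_inv_mul E hE, Matrix.one_mul,
      ← Matrix.mul_assoc P P⁻¹, Matrix.mul_nonsing_inv P hP, Matrix.one_mul]
  -- derivative of V
  have hV : ∀ t, HasDerivAt (fun t =>
      x t ⬝ᵥ Q.mulVec (x t) + e t ⬝ᵥ P.mulVec (e t) + ε t ⬝ᵥ P.mulVec (ε t))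
      (2 * (x t ⬝ᵥ Q.mulVec (deriv x t)) + 2 * (e t ⬝ᵥ P.mulVec (deriv e t))
        + 2 * (ε t ⬝ᵥ P.mulVec (deriv ε t))) t := by
    intro t
    have h1 := hasDerivAt_qf Q x (deriv x t) t (hx t).hasDerivAt
    have h2 := hasDerivAt_qf P e (deriv e t) t (he t).hasDerivAt
    have h3 := hasDerivAt_qf P ε (deriv ε t) t (hε t).hasDerivAt
    have := (h1.add h2).add h3
    convert this using 1
    any_goals exact rfl
    rw [show deriv x t ⬝ᵥ Q.mulVec (x t) = x t ⬝ᵥ Q.mulVec (deriv x t) by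
        rw [dot_swap, hQsymm],
      show deriv e t ⬝ᵥ P.mulVec (e t) = e t ⬝ᵥ P.mulVec (deriv e t) by
        rw [dot_swap, hPsymm],
      show deriv ε t ⬝ᵥ P.mulVec (ε t) = ε t ⬝ᵥ P.mulVec (deriv ε t) by
        rw [dot_swap, hPsymm]]
    ring
  -- the main bound
  have key : ∀ t, 2 * (x t ⬝ᵥ Q.mulVec (deriv x t)) + 2 * (e t ⬝ᵥ P.mulVec (deriv e t))
        + 2 * (ε t ⬝ᵥ P.mulVec (deriv ε t))
      ≤ Sum.elim (x t) (Sum.elim (e t) (ε t)) ⬝ᵥ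
          Ξ.mulVec (Sum.elim (x t) (Sum.elim (e t) (ε t))) := by
    intro t
    set s₁ : Fin m → ℝ := (H₁ * C).mulVec (e t) with hs₁
    set s₂ : Fin p → ℝ := (H₂ * C).mulVec (e t) with hs₂
    set s₃ : Fin p → ℝ := H₃.mulVec (ε t) with hs₃
    -- RHS expansion
    have hRHS : Sum.elim (x t) (Sum.elim (e t) (ε t)) ⬝ᵥ
          Ξ.mulVec (Sum.elim (x t) (Sum.elim (e t) (ε t)))
        = x t ⬝ᵥ (Q * (A + B * K) + (A + B * K)ᵀ * Q).mulVec (x t)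
          - 2 * (x t ⬝ᵥ (Q * B * Kbar).mulVec (e t))
          - 2 * (x t ⬝ᵥ (Q * B * Kbar).mulVec (ε t))
          + e t ⬝ᵥ (P * E⁻¹ * Abar + (P * E⁻¹ * Abar)ᵀ - N₁ * C - Cᵀ * N₁ᵀ).mulVec (e t)
          + 2 * (ε t ⬝ᵥ (N₁ * C).mulVec (e t))
          + ε t ⬝ᵥ (P * E⁻¹ * Abar + (P * E⁻¹ * Abar)ᵀ - N₂ - N₂ᵀ).mulVec (ε t) := by
      rw [hΞ, quad_blocks, quad_blocks, fromCols_mulVec_sumElim, fromRows_mulVec,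
        sumElim_dotProduct_sumElim, dotProduct_add, transpose_transpose,
        ← dot_swap (-(Q * B * Kbar)) (x t) (e t), ← dot_swap (-(Q * B * Kbar)) (x t) (ε t),
        ← dot_swap (N₁ * C) (ε t) (e t)]
      simp only [neg_mulVec, dotProduct_neg]
      ring
    rw [hRHS]
    -- x-term
    have hxterm : 2 * (x t ⬝ᵥ Q.mulVec (deriv x t))
        = x t ⬝ᵥ (Q * (A + B * K) + (A + B * K)ᵀ * Q).mulVec (x t)
          - 2 * (x t ⬝ᵥ (Q * B * Kbar).mulVec (e t))
          - 2 * (x t ⬝ᵥ (Q * B * Kbar).mulVec (ε t)) := by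
      have h2 := two_qf (Q * (A + B * K)) (x t)
      rw [transpose_mul, hQsymm] at h2
      rw [hxdyn t, mulVec_sub, mulVec_sub, dotProduct_sub, dotProduct_sub,
        mulVec_mulVec, mulVec_mulVec, mulVec_mulVec, ← Matrix.mul_assoc Q B Kbar]
      linarith [h2]
    -- e-term
    have hetermeq : e t ⬝ᵥ P.mulVec (deriv e t)
        = e t ⬝ᵥ (P * E⁻¹ * Abar - N₁ * C).mulVec (e t)
          + s₂ ⬝ᵥ (-(ωb • sgn s₂) - ω t) + s₁ ⬝ᵥ (d t - ρ • sgn s₁) := by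
      have hde : deriv e t = E⁻¹.mulVec ((Abar - L * C).mulVec (e t)
          + (L * Cω).mulVec (-(ωb • sgn s₂) - ω t) + Bfbar.mulVec (d t - ρ • sgn s₁)) := by
        have h0 : deriv e t = E⁻¹.mulVec (E.mulVec (deriv e t)) := by
          rw [mulVec_mulVec, Matrix.nonsing_inv_mul E hE, one_mulVec]
        rw [h0, hedyn t]
      have m1 : (P * E⁻¹) * (Abar - L * C) = P * E⁻¹ * Abar - N₁ * C := by
        rw [Matrix.mul_sub, ← Matrix.mul_assoc (P * E⁻¹) L C, hPEL]
      have m2 : (P * E⁻¹) * (L * Cω) = (H₂ * C)ᵀ := by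
        rw [hH₂]; simp only [Matrix.mul_assoc]
      have m3 : (P * E⁻¹) * Bfbar = (H₁ * C)ᵀ := hH₁.symm
      rw [hde, mulVec_mulVec, mulVec_add, mulVec_add, dotProduct_add, dotProduct_add,
        mulVec_mulVec, mulVec_mulVec, mulVec_mulVec, m1, m2, m3,
        dot_swap ((H₂ * C)ᵀ) (e t), dot_swap ((H₁ * C)ᵀ) (e t), transpose_transpose,
        transpose_transpose, ← hs₂, ← hs₁,
        dotProduct_comm _ s₂, dotProduct_comm _ s₁]
    have hs2le : s₂ ⬝ᵥ (-(ωb • sgn s₂) - ω t) ≤ 0 := by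
      rw [dotProduct_sub, dotProduct_neg, dotProduct_smul, dot_sgn, smul_eq_mul]
      have h1 : s₂ ⬝ᵥ (-(ω t)) ≤ ωb * ∑ i, |s₂ i| :=
        dot_le_sum_abs _ _ _ (fun i => by simpa using hω t i)
      rw [dotProduct_neg] at h1
      linarith
    have hsum1 : (0:ℝ) ≤ ∑ i, |s₁ i| := Finset.sum_nonneg fun i _ => abs_nonneg _
    have hs1le : s₁ ⬝ᵥ (d t - ρ • sgn s₁) ≤ 0 := by
      rw [dotProduct_sub, dotProduct_smul, dot_sgn, smul_eq_mul]
      have h1 : s₁ ⬝ᵥ d t ≤ c * ∑ i, |s₁ i| := dot_le_sum_abs _ _ _ (fun i => hd t i)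
      nlinarith
    have heterm : 2 * (e t ⬝ᵥ P.mulVec (deriv e t))
        ≤ e t ⬝ᵥ (P * E⁻¹ * Abar + (P * E⁻¹ * Abar)ᵀ - N₁ * C - Cᵀ * N₁ᵀ).mulVec (e t) := by
      have h2 := two_qf (P * E⁻¹ * Abar - N₁ * C) (e t)
      have hm : (P * E⁻¹ * Abar - N₁ * C) + (P * E⁻¹ * Abar - N₁ * C)ᵀ
          = P * E⁻¹ * Abar + (P * E⁻¹ * Abar)ᵀ - N₁ * C - Cᵀ * N₁ᵀ := by
        rw [transpose_sub, transpose_mul N₁ C]; abel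
      rw [hm] at h2
      rw [hetermeq]
      linarith
    -- ε-term
    have hεtermeq : ε t ⬝ᵥ P.mulVec (deriv ε t)
        = ε t ⬝ᵥ (P * E⁻¹ * Abar - N₂).mulVec (ε t)
          + ε t ⬝ᵥ (N₁ * C).mulVec (e t) + s₃ ⬝ᵥ (ω t - ωb • sgn s₃) := by
      have hde : deriv ε t = E⁻¹.mulVec ((Abar - Lc).mulVec (ε t)
          + (L * C).mulVec (e t) + (L * Cω).mulVec (ω t - ωb • sgn s₃)) := by
        have h0 : deriv ε t = E⁻¹.mulVec (E.mulVec (deriv ε t)) := by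
          rw [mulVec_mulVec, Matrix.nonsing_inv_mul E hE, one_mulVec]
        rw [h0, hεdyn t]
      have m1 : (P * E⁻¹) * (Abar - Lc) = P * E⁻¹ * Abar - N₂ := by
        rw [Matrix.mul_sub, hPELc]
      have m2 : (P * E⁻¹) * (L * C) = N₁ * C := by
        rw [← Matrix.mul_assoc (P * E⁻¹) L C, hPEL]
      have m3 : (P * E⁻¹) * (L * Cω) = H₃ᵀ := by
        rw [hH₃]; simp only [Matrix.mul_assoc]
      rw [hde, mulVec_mulVec, mulVec_add, mulVec_add, dotProduct_add, dotProduct_add,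
        mulVec_mulVec, mulVec_mulVec, mulVec_mulVec, m1, m2, m3,
        dot_swap (H₃ᵀ) (ε t), transpose_transpose, ← hs₃, dotProduct_comm _ s₃]
    have hs3le : s₃ ⬝ᵥ (ω t - ωb • sgn s₃) ≤ 0 := by
      rw [dotProduct_sub, dotProduct_smul, dot_sgn, smul_eq_mul]
      have h1 : s₃ ⬝ᵥ ω t ≤ ωb * ∑ i, |s₃ i| := dot_le_sum_abs _ _ _ (fun i => hω t i)
      linarith
    have hεterm : 2 * (ε t ⬝ᵥ P.mulVec (deriv ε t))
        ≤ ε t ⬝ᵥ (P * E⁻¹ * Abar + (P * E⁻¹ * Abar)ᵀ - N₂ - N₂ᵀ).mulVec (ε t)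
          + 2 * (ε t ⬝ᵥ (N₁ * C).mulVec (e t)) := by
      have h2 := two_qf (P * E⁻¹ * Abar - N₂) (ε t)
      have hm : (P * E⁻¹ * Abar - N₂) + (P * E⁻¹ * Abar - N₂)ᵀ
          = P * E⁻¹ * Abar + (P * E⁻¹ * Abar)ᵀ - N₂ - N₂ᵀ := by
        rw [transpose_sub]; abel
      rw [hm] at h2
      rw [hεtermeq]
      linarith
    linarith
  -- Ξ quadratic form is nonpositive
  have hΞle : ∀ v : (Fin n) ⊕ ((Fin n ⊕ Fin m) ⊕ (Fin n ⊕ Fin m)) → ℝ,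
      v ⬝ᵥ Ξ.mulVec v ≤ 0 := by
    intro v
    rcases eq_or_ne v 0 with hv | hv
    · simp [hv]
    · exact (hNegDef v hv).le
  refine ⟨fun t => ((hV t).differentiableAt), fun t => ?_, fun t hne => ?_⟩
  · rw [(hV t).deriv]
    exact le_trans (key t) (hΞle _)
  · rw [(hV t).deriv]
    refine lt_of_le_of_lt (key t) (hNegDef _ ?_)
    intro h0
    apply hne
    have hx0 : x t = 0 := funext fun i => congrFun h0 (Sum.inl i)
    have he0 : e t = 0 := funext fun i => congrFun h0 (Sum.inr (Sum.inl i))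
    have hε0 : ε t = 0 := funext fun i => congrFun h0 (Sum.inr (Sum.inr i))
    rw [hx0, he0, hε0]
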